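/- Let G be a finite group and φ : G → Aut_ℝ(ℂ⟦z⟧) an injective group homomorphism into the group of ℝ-algebra automorphisms of ℂ⟦z⟧. Suppose some φ_g is not ℂ-linear, i.e. N := {g ∈ G | φ_g(C(a)) = C(a) for all a ∈ ℂ} is a proper subset of G. Then N is a normal cyclic subgroup of index 2 in G, and G is isomorphic to the dihedral group of order 2n, where n = |N|. -/

import Mathlib

namespace RealActionDihedralAux

open PowerSeries

noncomputable section

local notation "R" => PowerSeries ℂ

lemma apply_C_eq (σ : R ≃ₐ[ℝ] R) (a : ℂ) :
    σ (C a) = algebraMap ℝ R a.re + algebraMap ℝ R a.im * σ (C Complex.I) := by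
  have h : (C a : R) = algebraMap ℝ R a.re + algebraMap ℝ R a.im * C Complex.I := by
    rw [PowerSeries.algebraMap_apply, PowerSeries.algebraMap_apply, ← map_mul, ← map_add]
    congr 1
    exact (Complex.re_add_im a).symm
  rw [h, map_add, map_mul, σ.commutes, σ.commutes]

lemma semilinear (σ : R ≃ₐ[ℝ] R) :
    (∀ a : ℂ, σ (C a) = C a) ∨ (∀ a : ℂ, σ (C a) = C (starRingEnd ℂ a)) := by
  have hsq : (σ (C Complex.I)) ^ 2 = (C Complex.I) ^ 2 := by
    rw [← map_pow, ← map_pow, Complex.I_sq, map_neg, map_one, map_neg, map_one]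
  have hfac : (σ (C Complex.I) - C Complex.I) * (σ (C Complex.I) + C Complex.I) = 0 := by
    have := sq_sub_sq (σ (C Complex.I)) (C Complex.I)
    rw [hsq, sub_self] at this
    rw [mul_comm, ← this]
  rcases mul_eq_zero.mp hfac with h | h
  · left
    intro a
    rw [apply_C_eq, sub_eq_zero.mp h, PowerSeries.algebraMap_apply, PowerSeries.algebraMap_apply,
      ← map_mul, ← map_add]
    congr 1
    simp [Complex.re_add_im]
  · right
    intro a
    have hI : σ (C Complex.I) = - C Complex.I := eq_neg_of_add_eq_zero_left h
    rw [apply_C_eq, hI, PowerSeries.algebraMap_apply, PowerSeries.algebraMap_apply, ← map_neg,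
      ← map_mul, ← map_add]
    congr 1
    simp [Complex.ext_iff]

lemma constCoeff_map_zero (σ : R ≃ₐ[ℝ] R) (f : R) (hf : constantCoeff f = 0) :
    constantCoeff (σ f) = 0 := by
  by_contra h
  have hu : IsUnit (σ f) := isUnit_iff_constantCoeff.mpr (isUnit_iff_ne_zero.mpr h)
  have : IsUnit f := by
    have := hu.map σ.symm
    rwa [σ.symm_apply_apply] at this
  rw [isUnit_iff_constantCoeff, hf] at this
  exact (not_isUnit_zero this).elim

lemma X_dvd_map (σ : R ≃ₐ[ℝ] R) : (X : R) ∣ σ X := by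
  rw [PowerSeries.X_dvd_iff]
  exact constCoeff_map_zero σ X (by simp)

lemma coeff_one_map (σ : R ≃ₐ[ℝ] R) (τ : ℂ →+* ℂ) (hτ : ∀ a, σ (C a) = C (τ a)) (f : R) :
    coeff 1 (σ f) = τ (coeff 1 f) * coeff 1 (σ X) := by
  set c0 := coeff 0 f
  set c1 := coeff 1 f
  have hdvd : (X : R) ^ 2 ∣ f - C c0 - C c1 * X := by
    rw [X_pow_dvd_iff]
    intro m hm
    interval_cases m <;> simp [c0, c1]
  obtain ⟨e, he⟩ := hdvd
  have hf : f = C c0 + C c1 * X + X ^ 2 * e := by rw [← he]; ring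
  have h2 : (X : R) ^ 2 ∣ (σ X) ^ 2 * σ e :=
    Dvd.dvd.mul_right (pow_dvd_pow_of_dvd (X_dvd_map σ) 2) _
  have hc2 : coeff 1 ((σ X) ^ 2 * σ e) = 0 := by
    rw [X_pow_dvd_iff] at h2
    exact h2 1 one_lt_two
  rw [hf, map_add σ, map_add σ, map_mul σ, map_mul σ, map_pow σ, hτ, hτ,
    map_add, map_add, hc2, coeff_C_mul]
  simp

lemma rigid (σ : R ≃ₐ[ℝ] R) (hC : ∀ a : ℂ, σ (C a) = C a) (hX : σ (X : R) = X)
    (f : R) : σ f = f := by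
  ext n
  set P : R := ∑ j ∈ Finset.range (n+1), C (coeff j f) * X ^ j with hPdef
  have hcoeffP : ∀ m, m ≤ n → coeff m P = coeff m f := by
    intro m hm
    rw [hPdef, map_sum]
    rw [Finset.sum_eq_single m]
    · simp [coeff_C_mul, coeff_X_pow]
    · intro j _ hj
      simp [coeff_C_mul, coeff_X_pow, Ne.symm hj]
    · intro h
      exact absurd (Finset.mem_range.mpr (Nat.lt_succ_of_le hm)) h
  have hP : σ P = P := by
    rw [hPdef, map_sum]
    refine Finset.sum_congr rfl fun j _ => ?_
    rw [map_mul σ, hC, map_pow σ, hX]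
  have hdvd : (X : R) ^ (n+1) ∣ f - P := by
    rw [X_pow_dvd_iff]
    intro m hm
    rw [map_sub, hcoeffP m (Nat.lt_succ_iff.mp hm), sub_self]
  obtain ⟨e, he⟩ := hdvd
  have hf : f = P + X ^ (n+1) * e := by rw [← he]; ring
  have hz : ∀ g : R, coeff n ((X : R)^(n+1) * g) = 0 := by
    intro g
    have : (X : R)^(n+1) ∣ X^(n+1) * g := Dvd.intro g rfl
    rw [X_pow_dvd_iff] at this
    exact this n (Nat.lt_succ_self n)
  rw [hf, map_add σ, map_mul σ, map_pow σ, hX, hP, map_add, map_add, hz, hz]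

lemma constCoeff_map (σ : R ≃ₐ[ℝ] R) (hC : ∀ a : ℂ, σ (C a) = C a) (e : R) :
    constantCoeff (σ e) = constantCoeff e := by
  have he : e = C (constantCoeff e) + (e - C (constantCoeff e)) := by ring
  rw [he, map_add σ, hC, map_add]
  rw [constCoeff_map_zero σ _ (by simp)]
  simp

lemma key_step (σ : R ≃ₐ[ℝ] R) (hC : ∀ a : ℂ, σ (C a) = C a)
    (k : ℕ) (hk2 : 2 ≤ k) (hmin : ∀ j < k, coeff j (σ X - X) = 0)
    (f : R) (hf : ∀ j < k, coeff j f = coeff j (X : R)) :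
    (∀ j < k, coeff j (σ f) = coeff j (X : R)) ∧
      coeff k (σ f) = coeff k f + coeff k (σ X - X) := by
  obtain ⟨w, hw⟩ : (X : R) ^ k ∣ σ X - X := X_pow_dvd_iff.mpr hmin
  obtain ⟨e, he⟩ : (X : R) ^ k ∣ f - X := by
    rw [X_pow_dvd_iff]
    intro j hj
    rw [map_sub, hf j hj, sub_self]
  have hfd : f = X + X ^ k * e := by rw [← he]; ring
  have hXmul : (X : R) * X ^ (k-1) = X ^ k := by
    rw [← pow_succ']
    congr 1
    omega
  obtain ⟨v, hv⟩ : ((X : R) ^ (k-1) * w) ∣ (1 + X ^ (k-1) * w) ^ k - 1 := by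
    have := sub_dvd_pow_sub_pow (1 + (X : R) ^ (k-1) * w) 1 k
    simpa using this
  have hXh : σ (X : R) = X + X ^ k * w := by rw [← hw]; ring
  have hsplit : (X : R) ^ k * (X ^ (k-1) * w) = X ^ (2*k-1) * w := by
    rw [← mul_assoc, ← pow_add]
    congr 2
    omega
  have hpow : (σ (X : R)) ^ k = X ^ k + X ^ (2*k-1) * (w * v) := by
    calc (σ (X : R)) ^ k = (X * (1 + X ^ (k-1) * w)) ^ k := by
          rw [hXh, mul_add, mul_one, ← mul_assoc, hXmul]
      _ = X ^ k * (1 + X ^ (k-1) * w) ^ k := mul_pow _ _ k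
      _ = X ^ k * (1 + X ^ (k-1) * w * v) := by
          congr 1
          linear_combination hv
      _ = X ^ k + X ^ (2*k-1) * (w * v) := by
          rw [mul_add, mul_one, ← mul_assoc, hsplit]; ring
  have hcoeff_high : ∀ j ≤ k, ∀ g : R, coeff j ((X : R) ^ (2*k-1) * g) = 0 := by
    intro j hj g
    have hdvd : (X : R) ^ (2*k-1) ∣ X ^ (2*k-1) * g := Dvd.intro g rfl
    exact X_pow_dvd_iff.mp hdvd j (by omega)
  have hσf : σ f = X + X ^ k * w + (X ^ k + X ^ (2*k-1) * (w * v)) * σ e := by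
    rw [hfd, map_add σ, map_mul σ, map_pow σ, hpow, hXh]
  have hconst : constantCoeff (σ e) = constantCoeff e := constCoeff_map σ hC e
  have hXke' : coeff k ((X:R) ^ k * e) = constantCoeff e := by
    have := coeff_X_pow_mul e k 0
    rw [zero_add] at this
    rw [this, coeff_zero_eq_constantCoeff]
  have hek : coeff k f = coeff k (X : R) + constantCoeff e := by
    rw [hfd, map_add, hXke']
  constructor
  · intro j hj
    rw [hσf]
    have h1 : coeff j ((X : R) ^ k * w) = 0 :=
      X_pow_dvd_iff.mp (Dvd.intro w rfl) j hj
    have h2 : coeff j ((X ^ k + X ^ (2*k-1) * (w * v)) * σ e) = 0 := by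
      have hdvd : (X : R) ^ k ∣ (X ^ k + X ^ (2*k-1) * (w * v)) * σ e := by
        apply Dvd.dvd.mul_right
        apply dvd_add dvd_rfl
        exact Dvd.dvd.mul_right (pow_dvd_pow X (by omega)) _
      exact X_pow_dvd_iff.mp hdvd j hj
    rw [map_add, map_add, h1, h2, add_zero, add_zero]
  · rw [hσf, add_mul, mul_assoc, map_add, map_add, map_add]
    have hXkw : coeff k ((X:R) ^ k * w) = coeff k (σ X - X) := by rw [← hw]
    have hXke : coeff k ((X:R) ^ k * σ e) = constantCoeff e := by
      have := coeff_X_pow_mul (σ e) k 0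
      rw [zero_add] at this
      rw [this, coeff_zero_eq_constantCoeff, hconst]
    rw [hXkw, hXke, hcoeff_high k le_rfl, hek]
    ring

lemma fix_X (σ : R ≃ₐ[ℝ] R) (hC : ∀ a : ℂ, σ (C a) = C a)
    (h1 : coeff 1 (σ X) = 1) (m : ℕ) (hm : 0 < m) (hσ : σ ^ m = 1) :
    σ (X : R) = X := by
  by_contra hne
  have hex : ∃ k, coeff k (σ X - X) ≠ 0 := by
    by_contra hc
    push_neg at hc
    apply hne
    have : σ X - X = 0 := by
      ext j
      simp [hc j]
    linear_combination this
  set k := Nat.find hex with hkdef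
  have hk : coeff k (σ X - X) ≠ 0 := Nat.find_spec hex
  have hmin : ∀ j < k, coeff j (σ X - X) = 0 := fun j hj => by
    have := Nat.find_min hex hj
    simpa using this
  have hk2 : 2 ≤ k := by
    by_contra hlt
    push_neg at hlt
    interval_cases k
    · apply hk
      rw [map_sub]
      rw [coeff_zero_eq_constantCoeff, constCoeff_map_zero σ X (by simp)]
      simp
    · apply hk
      rw [map_sub, h1, coeff_one_X, sub_self]
  have main : ∀ i : ℕ, (∀ j < k, coeff j ((σ ^ i) X) = coeff j (X : R)) ∧
      coeff k ((σ ^ i) X) = coeff k (X : R) + i * coeff k (σ X - X) := by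
    intro i
    induction i with
    | zero => simp
    | succ i ih =>
      have happ : (σ ^ (i+1)) (X : R) = σ ((σ ^ i) X) := by
        rw [pow_succ']
        rfl
      obtain ⟨ih1, ih2⟩ := ih
      obtain ⟨s1, s2⟩ := key_step σ hC k hk2 hmin ((σ ^ i) X) ih1
      refine ⟨fun j hj => by rw [happ]; exact s1 j hj, ?_⟩
      rw [happ, s2, ih2]
      push_cast
      ring
  have := (main m).2
  rw [hσ] at this
  simp only [AlgEquiv.one_apply] at this
  rw [left_eq_add] at this
  rcases mul_eq_zero.mp this with h | h
  · exact (Nat.cast_ne_zero.mpr hm.ne') h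
  · exact hk h

end

end RealActionDihedralAux

open PowerSeries RealActionDihedralAux in
/-- Let `G` be a finite group and `φ : G → Aut_ℝ(ℂ⟦z⟧)` an injective group homomorphism such
that the subgroup `N` of elements acting `ℂ`-linearly (i.e. fixing all constants) is proper.
Then `N` is a normal cyclic subgroup of index `2`, and `G` is isomorphic to the dihedral group
of order `2n` where `n = |N|`. -/
theorem real_action_on_complex_power_series_dihedral
    (G : Type*) [Group G] [Fintype G]
    (φ : G →* (PowerSeries ℂ ≃ₐ[ℝ] PowerSeries ℂ))
    (hφ : Function.Injective φ)
    (N : Subgroup G)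
    (hN : ∀ g : G, g ∈ N ↔ ∀ a : ℂ, φ g (PowerSeries.C a) = PowerSeries.C a)
    (hproper : N ≠ ⊤) :
    N.Normal ∧ IsCyclic N ∧ N.index = 2 ∧
      Nonempty (G ≃* DihedralGroup (Nat.card N)) := by
  -- the "derivative at 0" invariant
  set Λ : G → ℂ := fun g => coeff 1 (φ g X) with hΛdef
  -- anti-linear action of elements outside N
  have hconj : ∀ g ∉ N, ∀ a : ℂ, φ g (C a) = C (starRingEnd ℂ a) := by
    intro g hg
    rcases semilinear (φ g) with h | h
    · exact absurd ((hN g).mpr h) hg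
    · exact h
  -- applying φ g then φ g⁻¹ is the identity
  have hinvap : ∀ (g : G) (f : PowerSeries ℂ), φ g (φ g⁻¹ f) = f := by
    intro g f
    rw [← AlgEquiv.mul_apply, ← map_mul, mul_inv_cancel, map_one, AlgEquiv.one_apply]
  have happ : ∀ (g h : G) (f : PowerSeries ℂ), φ (g * h) f = φ g (φ h f) := by
    intro g h f
    rw [map_mul, AlgEquiv.mul_apply]
  -- N is normal
  have hnormal : N.Normal := by
    constructor
    intro n hn g
    rw [hN]
    intro a
    rw [happ, happ]
    rcases semilinear (φ g⁻¹) with h | h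
    · rw [h, (hN n).mp hn]
      conv_lhs => rw [← h]
      rw [hinvap]
    · rw [h, (hN n).mp hn]
      conv_lhs => rw [← h]
      rw [hinvap]
  -- multiplication rules for Λ
  have hmulN : ∀ g ∈ N, ∀ h : G, Λ (g * h) = Λ h * Λ g := by
    intro g hg h
    have := coeff_one_map (φ g) (RingHom.id ℂ) (fun a => by
      rw [(hN g).mp hg a]; rfl) (φ h X)
    simpa [hΛdef, happ] using this
  have hmulC : ∀ g ∉ N, ∀ h : G, Λ (g * h) = starRingEnd ℂ (Λ h) * Λ g := by
    intro g hg h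
    have := coeff_one_map (φ g) (starRingEnd ℂ) (hconj g hg) (φ h X)
    simpa [hΛdef, happ] using this
  have hΛone : Λ 1 = 1 := by
    simp [hΛdef]
  -- the kernel of Λ on N is trivial
  have triv : ∀ g ∈ N, Λ g = 1 → g = 1 := by
    intro g hg hΛg
    have hC : ∀ a : ℂ, φ g (C a) = C a := (hN g).mp hg
    have hm : 0 < orderOf g := orderOf_pos g
    have hpow : (φ g) ^ orderOf g = 1 := by
      rw [← map_pow, pow_orderOf_eq_one, map_one]
    have hXfix : φ g (X : PowerSeries ℂ) = X := fix_X (φ g) hC hΛg (orderOf g) hm hpow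
    have : φ g = 1 := by
      apply AlgEquiv.ext
      intro f
      rw [AlgEquiv.one_apply]
      exact rigid (φ g) hC hXfix f
    apply hφ
    rw [this, map_one]
  -- Λ never vanishes
  have hΛne : ∀ g : G, Λ g ≠ 0 := by
    intro g h0
    by_cases hg : g ∈ N
    · have := hmulN g hg g⁻¹
      rw [mul_inv_cancel, hΛone, h0, mul_zero] at this
      exact one_ne_zero this
    · have := hmulC g hg g⁻¹
      rw [mul_inv_cancel, hΛone, h0, mul_zero] at this
      exact one_ne_zero this
  -- injectivity of Λ on N
  have injN : ∀ g ∈ N, ∀ h ∈ N, Λ g = Λ h → g = h := by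
    intro g hg h hh he
    have h1 : Λ (h * h⁻¹) = Λ h⁻¹ * Λ h := hmulN h hh h⁻¹
    rw [mul_inv_cancel, hΛone] at h1
    have h2 : Λ (g * h⁻¹) = Λ h⁻¹ * Λ g := hmulN g hg h⁻¹
    rw [he, ← h1] at h2
    have : g * h⁻¹ = 1 := triv _ (N.mul_mem hg (N.inv_mem hh)) h2
    exact mul_inv_eq_one.mp this
  -- product of two elements outside N lies in N
  have hmul_notmem : ∀ g ∉ N, ∀ h ∉ N, g * h ∈ N := by
    intro g hg h hh
    rw [hN]
    intro a
    rw [happ, hconj h hh, hconj g hg]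
    simp
  -- a fixed element outside N
  obtain ⟨s, hs⟩ : ∃ s : G, s ∉ N := by
    by_contra hc
    push_neg at hc
    exact hproper (((Subgroup.eq_top_iff' N).mpr hc))
  -- index of N is 2
  have hindex : N.index = 2 := by
    rw [Subgroup.index_eq_two_iff]
    refine ⟨s, fun b => ?_⟩
    by_cases hb : b ∈ N
    · refine Or.inr ⟨hb, fun hbs => hs ?_⟩
      have := N.mul_mem (N.inv_mem hb) hbs
      rwa [inv_mul_cancel_left] at this
    · exact Or.inl ⟨hmul_notmem b hb s hs, hb⟩
  -- N is cyclic
  have hcyclic : IsCyclic N := by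
    refine isCyclic_of_subgroup_isDomain (R := ℂ) (G := N)
      { toFun := fun x => Λ x
        map_one' := hΛone
        map_mul' := fun x y => by
          have := hmulN x x.2 y
          rw [mul_comm (Λ (y : G)) (Λ (x : G))] at this
          simpa using this } ?_
    intro x y hxy
    exact Subtype.ext (injN x x.2 y y.2 hxy)
  -- powers of Λ on N
  have hΛpow : ∀ g ∈ N, ∀ m : ℕ, Λ (g ^ m) = Λ g ^ m := by
    intro g hg m
    induction m with
    | zero => simpa using hΛone
    | succ m ih =>
      rw [pow_succ', hmulN g hg (g ^ m), ih, ← pow_succ]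
  -- positive reals that are roots of unity equal 1
  have real_pow : ∀ (r : ℝ), 0 ≤ r → ∀ m : ℕ, 0 < m → ((r : ℂ)) ^ m = 1 → (r : ℂ) = 1 := by
    intro r hr m hm h
    have hr' : r ^ m = 1 := by exact_mod_cast h
    have : r = 1 := by
      rcases lt_trichotomy r 1 with hlt | heq | hgt
      · exfalso
        have := pow_lt_one₀ hr hlt hm.ne'
        rw [hr'] at this
        exact lt_irrefl 1 this
      · exact heq
      · exfalso
        have := one_lt_pow₀ hgt hm.ne'
        rw [hr'] at this
        exact lt_irrefl 1 this
    exact_mod_cast this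
  -- Λ takes values on the unit circle on N
  have hΛunit : ∀ g ∈ N, starRingEnd ℂ (Λ g) * Λ g = 1 := by
    intro g hg
    have h1 : Λ g ^ orderOf g = 1 := by
      rw [← hΛpow g hg, pow_orderOf_eq_one, hΛone]
    have h2 : (starRingEnd ℂ (Λ g) * Λ g) ^ orderOf g = 1 := by
      rw [mul_pow, ← map_pow, h1, map_one, one_mul]
    have h3 : starRingEnd ℂ (Λ g) * Λ g = ((Complex.normSq (Λ g) : ℝ) : ℂ) := by
      rw [mul_comm, Complex.mul_conj]
    rw [h3] at h2 ⊢
    exact real_pow _ (Complex.normSq_nonneg _) (orderOf g) (orderOf_pos g) h2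
  -- s is an involution
  have hss : s * s = 1 := by
    have hmem : s * s ∈ N := hmul_notmem s hs s hs
    have h1 : Λ (s * s) = starRingEnd ℂ (Λ s) * Λ s := hmulC s hs s
    have h3 : Λ (s * s) = ((Complex.normSq (Λ s) : ℝ) : ℂ) := by
      rw [h1, mul_comm, Complex.mul_conj]
    have h2 : Λ (s * s) ^ orderOf (s * s) = 1 := by
      rw [← hΛpow _ hmem, pow_orderOf_eq_one, hΛone]
    rw [h3] at h2
    have := real_pow _ (Complex.normSq_nonneg _) _ (orderOf_pos (s * s)) h2
    rw [← h3] at this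
    exact triv _ hmem this
  have hconjΛs : starRingEnd ℂ (Λ s) * Λ s = 1 := by
    have h1 : Λ (s * s) = starRingEnd ℂ (Λ s) * Λ s := hmulC s hs s
    rw [hss, hΛone] at h1
    exact h1.symm
  -- the dihedral relation
  have hrel : ∀ ρ ∈ N, s * ρ * s = ρ⁻¹ := by
    intro ρ hρ
    have hsρ : s * ρ ∉ N := by
      intro hc
      apply hs
      have := N.mul_mem hc (N.inv_mem hρ)
      rwa [mul_inv_cancel_right] at this
    have hmem : s * ρ * s ∈ N := hmul_notmem _ hsρ s hs
    have hinv : Λ ρ⁻¹ * Λ ρ = 1 := by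
      have := hmulN ρ hρ ρ⁻¹
      rw [mul_inv_cancel, hΛone] at this
      exact this.symm
    have hval : Λ (s * ρ * s) = Λ ρ⁻¹ := by
      have e1 : Λ (s * (ρ * s)) = starRingEnd ℂ (Λ (ρ * s)) * Λ s := hmulC s hs (ρ * s)
      have e2 : Λ (ρ * s) = Λ s * Λ ρ := hmulN ρ hρ s
      have e3 : Λ (s * ρ * s) = starRingEnd ℂ (Λ ρ) *
          (starRingEnd ℂ (Λ s) * Λ s) := by
        rw [mul_assoc, e1, e2, map_mul]
        ring
      rw [e3, hconjΛs, mul_one]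
      -- conj (Λ ρ) = (Λ ρ)⁻¹ = Λ ρ⁻¹
      have h4 : starRingEnd ℂ (Λ ρ) * Λ ρ = 1 := hΛunit ρ hρ
      rw [← hinv] at h4
      exact mul_right_cancel₀ (hΛne ρ) h4
    exact injN _ hmem _ (N.inv_mem hρ) hval
  -- build the isomorphism with the dihedral group
  haveI := hcyclic
  obtain ⟨ρ₀, hρ₀⟩ := IsCyclic.exists_generator (α := ↥N)
  set n := Nat.card ↥N with hndef
  haveI : NeZero n := ⟨by rw [hndef]; exact Nat.card_pos.ne'⟩
  have horder : orderOf (ρ₀ : G) = n := by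
    rw [Subgroup.orderOf_coe]
    exact orderOf_eq_card_of_forall_mem_zpowers hρ₀
  set ρ : G := (ρ₀ : G) with hρdef
  have hρmem : ρ ∈ N := ρ₀.2
  set ζ : ZMod n → G := fun i => ρ ^ i.val with hζdef
  have hζmem : ∀ i, ζ i ∈ N := fun i => N.pow_mem hρmem _
  have hζadd : ∀ i j, ζ (i + j) = ζ i * ζ j := by
    intro i j
    show ρ ^ (i + j).val = ρ ^ i.val * ρ ^ j.val
    rw [ZMod.val_add]
    have hmod := pow_mod_orderOf ρ (i.val + j.val)
    rw [horder] at hmod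
    rw [hmod, pow_add]
  have hζzero : ζ 0 = 1 := by
    show ρ ^ (0 : ZMod n).val = 1
    rw [ZMod.val_zero, pow_zero]
  have hζneg : ∀ i, ζ (-i) = (ζ i)⁻¹ := by
    intro i
    have h1 : ζ i * ζ (-i) = 1 := by rw [← hζadd, add_neg_cancel, hζzero]
    exact eq_inv_of_mul_eq_one_right h1
  have hswap : ∀ i, ζ i * s = s * ζ (-i) := by
    intro i
    have h1 : s * ζ i * s = (ζ i)⁻¹ := hrel _ (hζmem i)
    rw [hζneg]
    calc ζ i * s = (s * s) * ζ i * s := by rw [hss, one_mul]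
      _ = s * (s * ζ i * s) := by group
      _ = s * (ζ i)⁻¹ := by rw [h1]
  have hFdef : ∀ x : DihedralGroup n, ∃ y : G, True := fun _ => ⟨1, trivial⟩
  let F0 : DihedralGroup n → G := fun x =>
    match x with
    | DihedralGroup.r i => ζ i
    | DihedralGroup.sr i => s * ζ i
  have hF0mul : ∀ x y : DihedralGroup n, F0 (x * y) = F0 x * F0 y := by
    rintro (i | i) (j | j)
    · show ζ (i + j) = ζ i * ζ j
      exact hζadd i j
    · show s * ζ (j - i) = ζ i * (s * ζ j)
      rw [sub_eq_neg_add, hζadd, ← mul_assoc, ← hswap, mul_assoc]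
    · show s * ζ (i + j) = s * ζ i * ζ j
      rw [hζadd, mul_assoc]
    · show ζ (j - i) = s * ζ i * (s * ζ j)
      rw [mul_assoc, ← mul_assoc (ζ i), hswap, sub_eq_neg_add, hζadd]
      rw [← mul_assoc, ← mul_assoc, hss, one_mul]
  let F : DihedralGroup n →* G :=
    { toFun := F0
      map_one' := by
        show ζ 0 = 1
        exact hζzero
      map_mul' := hF0mul }
  have hFinj : Function.Injective F := by
    rw [injective_iff_map_eq_one]
    rintro (i | i) h
    · have hζi : ρ ^ i.val = 1 := h
      have hdvd : n ∣ i.val := by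
        have := orderOf_dvd_of_pow_eq_one hζi
        rwa [horder] at this
      have hv0 : i.val = 0 := Nat.eq_zero_of_dvd_of_lt hdvd (ZMod.val_lt i)
      have : i = 0 := (ZMod.val_eq_zero i).mp hv0
      rw [this]
      exact DihedralGroup.one_def.symm
    · exfalso
      have hζi : s * ζ i = 1 := h
      apply hs
      have : s = (ζ i)⁻¹ := eq_inv_of_mul_eq_one_left hζi
      rw [this]
      exact N.inv_mem (hζmem i)
  have hcard : Fintype.card (DihedralGroup n) = Fintype.card G := by
    rw [DihedralGroup.card, ← Nat.card_eq_fintype_card (α := G), ← N.card_mul_index, hindex,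
      ← hndef]
    ring
  have hFbij : Function.Bijective F :=
    (Fintype.bijective_iff_injective_and_card F).mpr ⟨hFinj, hcard⟩
  exact ⟨hnormal, hcyclic, hindex, ⟨(MulEquiv.ofBijective F hFbij).symm⟩⟩
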